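/- For every integer p ≥ 1 there exists a constant C > 0 such that |ψ(x)| = O(exp(−C‖x‖^{1/(2p)})) as ‖x‖ → ∞; more precisely, there exist C > 0 and R > 0 such that |ψ(x)| ≤ exp(−C‖x‖^{1/(2p)}) for every x ∈ ℝ^p with ‖x‖ ≥ R, where ‖·‖ denotes the Euclidean norm on ℝ^p. -/

import Mathlib

open MeasureTheory Filter Real
noncomputable section
namespace Stmt13

/-- `ψ(x₁,…,x_p) = exp(−(1/16π) ∫_ℝ (1 − exp(i Σ_{q=1}^p x_q/t^{2q})) dt)`. -/
def psi (p : ℕ) (x : Fin p → ℝ) : ℂ :=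
  Complex.exp (-((((16 * π)⁻¹ : ℝ) : ℂ) *
    ∫ t : ℝ, (1 - Complex.exp (Complex.I *
      ((∑ q : Fin p, x q / t ^ (2 * (q.1 + 1)) : ℝ) : ℂ)))))

def S (p : ℕ) (x : Fin p → ℝ) (t : ℝ) : ℝ := ∑ q : Fin p, x q / t ^ (2 * (q.1 + 1))
def f (p : ℕ) (x : Fin p → ℝ) (t : ℝ) : ℝ := 1 - Real.cos (S p x t)
def J (p : ℕ) (x : Fin p → ℝ) : ℝ := ∫ t : ℝ, f p x t

lemma one_sub_cos_le_sq (θ : ℝ) : 1 - Real.cos θ ≤ θ ^ 2 / 2 := by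
  have := Real.one_sub_sq_div_two_le_cos (x := θ)
  linarith

lemma abs_S_le (p : ℕ) (x : Fin p → ℝ) {t : ℝ} (ht : 1 ≤ |t|) :
    |S p x t| ≤ (∑ q : Fin p, |x q|) / t ^ 2 := by
  have ht2 : (0:ℝ) < t ^ 2 := by nlinarith [sq_abs t]
  calc |S p x t| ≤ ∑ q : Fin p, |x q / t ^ (2 * (q.1 + 1))| :=
        Finset.abs_sum_le_sum_abs _ _
    _ ≤ ∑ q : Fin p, |x q| / t ^ 2 := by
        apply Finset.sum_le_sum
        intro q _
        rw [abs_div, abs_pow]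
        apply div_le_div_of_nonneg_left (abs_nonneg _) ht2
        calc t ^ 2 = |t| ^ 2 := (sq_abs t).symm
          _ ≤ |t| ^ (2 * (q.1 + 1)) := pow_le_pow_right₀ ht (by omega)
    _ = (∑ q : Fin p, |x q|) / t ^ 2 := by rw [Finset.sum_div]

lemma integrable_bound (A : ℝ) (hA : 0 ≤ A) :
    Integrable (fun t : ℝ => min 2 (A / t ^ 2)) := by
  have hmeas : Measurable (fun t : ℝ => min 2 (A / t ^ 2)) :=
    measurable_const.min (measurable_const.div (measurable_id.pow_const 2))
  have hnonneg : ∀ t : ℝ, 0 ≤ min 2 (A / t ^ 2) := fun t =>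
    le_min (by norm_num) (div_nonneg hA (sq_nonneg t))
  have h2 : IntegrableOn (fun t : ℝ => min 2 (A / t ^ 2)) (Set.Ioi 1) := by
    have hbase : IntegrableOn (fun t : ℝ => A * t ^ (-2 : ℝ)) (Set.Ioi 1) :=
      (integrableOn_Ioi_rpow_of_lt (by norm_num) one_pos).const_mul A
    apply hbase.mono' (hmeas.aestronglyMeasurable.restrict)
    filter_upwards [ae_restrict_mem measurableSet_Ioi] with t ht
    have ht0 : (0:ℝ) < t := lt_trans one_pos ht
    rw [Real.norm_eq_abs, abs_of_nonneg (hnonneg t)]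
    have hpow : t ^ (-2 : ℝ) = (t ^ (2:ℕ))⁻¹ := by
      rw [Real.rpow_neg ht0.le]
      congr 1
      rw [← Real.rpow_natCast t 2]
      norm_num
    have : A / t ^ 2 = A * t ^ (-2 : ℝ) := by
      rw [hpow, div_eq_mul_inv]
    rw [← this]
    exact min_le_right _ _
  have h1 : IntegrableOn (fun t : ℝ => min 2 (A / t ^ 2)) (Set.Icc (-1) 1) := by
    apply Integrable.mono' (integrableOn_const (s := Set.Icc (-1:ℝ) 1) (C := (2:ℝ)) measure_Icc_lt_top.ne)
      hmeas.aestronglyMeasurable.restrict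
    exact ae_of_all _ fun t => by
      rw [Real.norm_eq_abs, abs_of_nonneg (hnonneg t)]; exact min_le_left _ _
  have h3 : IntegrableOn (fun t : ℝ => min 2 (A / t ^ 2)) (Set.Iio (-1)) := by
    have h2' : Integrable ((Set.Ioi (1:ℝ)).indicator (fun t : ℝ => min 2 (A / t ^ 2))) :=
      (integrable_indicator_iff measurableSet_Ioi).2 h2
    have h3' := h2'.comp_neg
    have heq : (fun t : ℝ => (Set.Ioi (1:ℝ)).indicator (fun s : ℝ => min 2 (A / s ^ 2)) (-t))
        = (Set.Iio (-1:ℝ)).indicator (fun t : ℝ => min 2 (A / t ^ 2)) := by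
      funext t
      by_cases h : t < -1
      · rw [Set.indicator_of_mem (by simp only [Set.mem_Ioi]; linarith : -t ∈ Set.Ioi (1:ℝ)),
          Set.indicator_of_mem (by simpa using h : t ∈ Set.Iio (-1:ℝ))]
        norm_num
      · rw [Set.indicator_of_notMem (by simp only [Set.mem_Ioi, not_lt]; linarith : -t ∉ Set.Ioi (1:ℝ)),
          Set.indicator_of_notMem (by simpa using h : t ∉ Set.Iio (-1:ℝ))]
    rw [heq] at h3'
    exact (integrable_indicator_iff measurableSet_Iio).1 h3'
  have hcover : (Set.univ : Set ℝ) ⊆ Set.Iio (-1) ∪ (Set.Icc (-1) 1 ∪ Set.Ioi 1) := by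
    intro t _
    rcases lt_or_ge t (-1) with h | h
    · exact Or.inl h
    · rcases le_or_gt t 1 with h' | h'
      · exact Or.inr (Or.inl ⟨h, h'⟩)
      · exact Or.inr (Or.inr h')
  rw [← integrableOn_univ]
  exact ((h3.union (h1.union h2)).mono_set hcover)

lemma norm_integrand_le (θ : ℝ) :
    ‖1 - Complex.exp (Complex.I * (θ : ℂ))‖ ≤ |θ| := by
  have hre : ((1 : ℂ) - Complex.exp (Complex.I * (θ:ℂ))).re = 1 - Real.cos θ := by
    rw [mul_comm]
    simp [Complex.exp_ofReal_mul_I_re]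
  have him : ((1 : ℂ) - Complex.exp (Complex.I * (θ:ℂ))).im = -Real.sin θ := by
    rw [mul_comm]
    simp [Complex.exp_ofReal_mul_I_im]
  have hsq : ‖(1 : ℂ) - Complex.exp (Complex.I * (θ:ℂ))‖ ^ 2
      = 2 - 2 * Real.cos θ := by
    rw [Complex.sq_norm, Complex.normSq_apply, hre, him]
    nlinarith [Real.sin_sq_add_cos_sq θ]
  have h2 : ‖(1 : ℂ) - Complex.exp (Complex.I * (θ:ℂ))‖ ^ 2 ≤ θ ^ 2 := by
    rw [hsq]; nlinarith [one_sub_cos_le_sq θ]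
  calc ‖1 - Complex.exp (Complex.I * (θ:ℂ))‖
      = Real.sqrt (‖1 - Complex.exp (Complex.I * (θ:ℂ))‖ ^ 2) :=
        (Real.sqrt_sq (norm_nonneg _)).symm
    _ ≤ Real.sqrt (θ ^ 2) := Real.sqrt_le_sqrt h2
    _ = |θ| := Real.sqrt_sq_eq_abs θ

lemma norm_integrand_le_two (θ : ℝ) :
    ‖1 - Complex.exp (Complex.I * (θ : ℂ))‖ ≤ 2 := by
  calc ‖1 - Complex.exp (Complex.I * (θ:ℂ))‖
      ≤ ‖(1:ℂ)‖ + ‖Complex.exp (Complex.I * (θ:ℂ))‖ := by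
        exact norm_sub_le (1:ℂ) (Complex.exp (Complex.I * (θ:ℂ)))
    _ = 2 := by
      rw [mul_comm, Complex.norm_exp_ofReal_mul_I]
      simp; norm_num


lemma S_zero (p : ℕ) (x : Fin p → ℝ) : S p x 0 = 0 := by
  simp [S, zero_pow]

lemma measurable_S (p : ℕ) (x : Fin p → ℝ) : Measurable (S p x) := by
  apply Finset.measurable_sum
  intro q _
  exact measurable_const.div (measurable_id.pow_const _)

lemma le_min_bound (p : ℕ) (x : Fin p → ℝ) {A : ℝ} (hA2 : 2 ≤ A)
    (hAB : (∑ q : Fin p, |x q|) ≤ A) (t : ℝ) {v : ℝ}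
    (hv2 : v ≤ 2) (hvS : v ≤ |S p x t|) :
    v ≤ min 2 (A / t ^ 2) := by
  refine le_min hv2 ?_
  rcases eq_or_ne t 0 with rfl | ht0
  · simp only [S_zero, abs_zero] at hvS
    calc v ≤ 0 := hvS
      _ ≤ A / 0 ^ 2 := by positivity
  · have ht2 : (0:ℝ) < t ^ 2 := by positivity
    rcases le_or_gt 2 (A / t ^ 2) with h | h
    · linarith
    · have h1 : 1 ≤ |t| := by
        nlinarith [sq_abs t, abs_nonneg t, (div_lt_iff₀ ht2).1 h]
      exact le_trans hvS (le_trans (abs_S_le p x h1)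
        (by gcongr))

lemma integrable_F (p : ℕ) (x : Fin p → ℝ) :
    Integrable (fun t : ℝ => (1 : ℂ) - Complex.exp (Complex.I * ((S p x t : ℝ) : ℂ))) := by
  set A : ℝ := max 2 (∑ q : Fin p, |x q|) with hA
  have hA2 : 2 ≤ A := le_max_left _ _
  have hAB : (∑ q : Fin p, |x q|) ≤ A := le_max_right _ _
  apply (integrable_bound A (by linarith)).mono'
  · exact ((Complex.measurable_exp.comp
      ((Complex.measurable_ofReal.comp (measurable_S p x)).const_mul Complex.I)).const_sub
      1).aestronglyMeasurable
  · refine ae_of_all _ fun t => ?_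
    exact le_min_bound p x hA2 hAB t (norm_integrand_le_two _)
      (norm_integrand_le _)

lemma integrable_f (p : ℕ) (x : Fin p → ℝ) : Integrable (f p x) := by
  have heq : f p x = fun t =>
      ((1 : ℂ) - Complex.exp (Complex.I * ((S p x t : ℝ) : ℂ))).re := by
    funext t
    rw [mul_comm]
    simp [f, Complex.exp_ofReal_mul_I_re]
  rw [heq]
  exact (integrable_F p x).re

lemma abs_psi (p : ℕ) (x : Fin p → ℝ) :
    ‖psi p x‖ = Real.exp (-((16 * π)⁻¹ * J p x)) := by
  rw [psi, Complex.norm_exp]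
  congr 1
  rw [Complex.neg_re, Complex.re_ofReal_mul]
  congr 2
  have hre := integral_re (integrable_F p x)
  rw [RCLike.re_eq_complex_re] at hre
  rw [show (∫ t : ℝ, ((1:ℂ) - Complex.exp (Complex.I *
      ((∑ q : Fin p, x q / t ^ (2 * (q.1 + 1)) : ℝ) : ℂ))))
      = ∫ t : ℝ, ((1:ℂ) - Complex.exp (Complex.I * ((S p x t : ℝ) : ℂ))) from rfl,
    ← hre, J]
  congr 1
  funext t
  rw [mul_comm]
  simp [f, Complex.exp_ofReal_mul_I_re]

lemma J_scale (p : ℕ) (x : Fin p → ℝ) {l : ℝ} (hl : 0 < l) :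
    J p x = l * J p (fun q => x q / l ^ (2 * (q.1 + 1))) := by
  have key : ∀ s : ℝ, f p x (l * s) = f p (fun q => x q / l ^ (2 * (q.1 + 1))) s := by
    intro s
    unfold f S
    congr 2
    apply Finset.sum_congr rfl
    intro q _
    rw [mul_pow, ← div_div]
  have := Measure.integral_comp_mul_left (f p x) l
  rw [J, J]
  have h2 : ∫ s : ℝ, f p x (l * s) = ∫ s, f p (fun q => x q / l ^ (2 * (q.1 + 1))) s := by
    congr 1; funext s; exact key s
  rw [h2] at this
  rw [this, abs_of_pos (inv_pos.2 hl), smul_eq_mul, ← mul_assoc,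
    mul_inv_cancel₀ hl.ne', one_mul]


lemma one_sub_cos_le_abs (θ : ℝ) : 1 - Real.cos θ ≤ |θ| := by
  rcases le_or_gt (|θ|) 2 with h | h
  · nlinarith [one_sub_cos_le_sq θ, sq_abs θ, abs_nonneg θ]
  · nlinarith [Real.neg_one_le_cos θ]

lemma f_nonneg (p : ℕ) (x : Fin p → ℝ) (t : ℝ) : 0 ≤ f p x t := by
  have := Real.cos_le_one (S p x t)
  rw [f]
  linarith

lemma f_le_two (p : ℕ) (x : Fin p → ℝ) (t : ℝ) : f p x t ≤ 2 := by
  have := Real.neg_one_le_cos (S p x t)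
  rw [f]
  linarith

lemma S_cont (p : ℕ) (x : Fin p → ℝ) {t : ℝ} (ht : t ≠ 0) :
    ContinuousAt (S p x) t := by
  have h : ∀ q : Fin p, q ∈ Finset.univ →
      ContinuousAt (fun t : ℝ => x q / t ^ (2 * (q.1 + 1))) t := fun q _ =>
    ContinuousAt.div continuousAt_const (continuousAt_pow _ _) (pow_ne_zero _ ht)
  exact tendsto_finset_sum _ h

lemma J_pos (p : ℕ) (x : Fin p → ℝ) (hx : x ≠ 0) : 0 < J p x := by
  classical
  set Q : Finset (Fin p) := Finset.univ.filter (fun q => x q ≠ 0) with hQdef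
  have hQ : Q.Nonempty := by
    obtain ⟨q, hq⟩ := Function.ne_iff.1 hx
    exact ⟨q, by simp only [hQdef, Finset.mem_filter, Finset.mem_univ, true_and]; simpa using hq⟩
  set k : Fin p := Q.max' hQ with hk
  have hxk : x k ≠ 0 := by
    have := Q.max'_mem hQ
    simpa [hQdef] using this
  have hle_k : ∀ q : Fin p, x q ≠ 0 → q ≤ k := fun q hq =>
    Q.le_max' q (by simp [hQdef, hq])
  set a : ℝ := |x k| with ha
  have ha0 : 0 < a := abs_pos.2 hxk
  set B : ℝ := ∑ q : Fin p, |x q| with hB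
  have haB : a ≤ B := Finset.single_le_sum (f := fun q => |x q|)
    (fun q _ => abs_nonneg _) (Finset.mem_univ k)
  have hB0 : 0 < B := lt_of_lt_of_le ha0 haB
  set n : ℕ := 2 * (k.1 + 1) with hn
  have hn0 : n ≠ 0 := by omega
  set t₁ : ℝ := min (1/2) (min (Real.sqrt (a / (2 * B + 1))) ((a/8) ^ ((n:ℝ))⁻¹)) with ht₁
  have ht₁0 : 0 < t₁ := by
    apply lt_min (by norm_num)
    exact lt_min (Real.sqrt_pos.2 (by positivity)) (Real.rpow_pos_of_pos (by positivity) _)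
  have ht₁half : t₁ ≤ 1/2 := min_le_left _ _
  have ht₁1 : t₁ ≤ 1 := le_trans ht₁half (by norm_num)
  have hBt₁ : B * t₁ ^ 2 ≤ a / 2 := by
    have h1 : t₁ ≤ Real.sqrt (a / (2 * B + 1)) := le_trans (min_le_right _ _) (min_le_left _ _)
    have h2 : t₁ ^ 2 ≤ a / (2 * B + 1) := by
      have h3 := pow_le_pow_left₀ ht₁0.le h1 2
      rwa [Real.sq_sqrt (by positivity)] at h3
    have h4 : B * t₁ ^ 2 ≤ B * (a / (2 * B + 1)) :=
      mul_le_mul_of_nonneg_left h2 hB0.le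
    have h5 : B * (a / (2 * B + 1)) ≤ a / 2 := by
      rw [← mul_div_assoc, div_le_div_iff₀ (by positivity) (by norm_num)]
      nlinarith
    linarith
  have hnt₁ : t₁ ^ n ≤ a / 8 := by
    have h1 : t₁ ≤ (a/8) ^ ((n:ℝ))⁻¹ := le_trans (min_le_right _ _) (min_le_right _ _)
    have h2 := pow_le_pow_left₀ ht₁0.le h1 n
    rwa [Real.rpow_inv_natCast_pow (by positivity) hn0] at h2
  have hpow_pos : 0 < t₁ ^ n := pow_pos ht₁0 n
  have hk_pos : 0 < t₁ ^ (2 * k.1) := pow_pos ht₁0 _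
  have hS1 : 4 ≤ |S p x t₁| := by
    have hsplit : S p x t₁ = x k / t₁ ^ n +
        ∑ q ∈ Finset.univ.erase k, x q / t₁ ^ (2 * (q.1 + 1)) := by
      rw [S, ← Finset.add_sum_erase _ _ (Finset.mem_univ k)]
    have hrest : |∑ q ∈ Finset.univ.erase k, x q / t₁ ^ (2 * (q.1 + 1))|
        ≤ B / t₁ ^ (2 * k.1) := by
      calc |∑ q ∈ Finset.univ.erase k, x q / t₁ ^ (2 * (q.1 + 1))|
          ≤ ∑ q ∈ Finset.univ.erase k, |x q / t₁ ^ (2 * (q.1 + 1))| :=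
            Finset.abs_sum_le_sum_abs _ _
        _ ≤ ∑ q ∈ Finset.univ.erase k, |x q| / t₁ ^ (2 * k.1) := by
            apply Finset.sum_le_sum
            intro q hq
            rcases eq_or_ne (x q) 0 with h0 | h0
            · rw [h0]
              simp only [zero_div, abs_zero]
              positivity
            · have hqk : q < k := lt_of_le_of_ne (hle_k q h0) (Finset.ne_of_mem_erase hq)
              have hexp : 2 * (q.1 + 1) ≤ 2 * k.1 := by
                have hlt : q.1 < k.1 := hqk
                omega
              rw [abs_div, abs_pow, abs_of_pos ht₁0]
              apply div_le_div_of_nonneg_left (abs_nonneg _) (pow_pos ht₁0 _)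
              exact pow_le_pow_of_le_one ht₁0.le ht₁1 hexp
        _ ≤ B / t₁ ^ (2 * k.1) := by
            rw [← Finset.sum_div, hB]
            exact div_le_div_of_nonneg_right (Finset.sum_le_sum_of_subset_of_nonneg
              (Finset.erase_subset _ _) (fun q _ _ => abs_nonneg (x q)))
              (pow_nonneg ht₁0.le _)
    have habs : |x k / t₁ ^ n| = a / t₁ ^ n := by
      rw [abs_div, abs_pow, abs_of_pos ht₁0, ← ha]
    have hlower : a / t₁ ^ n - B / t₁ ^ (2 * k.1) ≤ |S p x t₁| := by
      have hAe : x k / t₁ ^ n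
          = S p x t₁ - ∑ q ∈ Finset.univ.erase k, x q / t₁ ^ (2 * (q.1 + 1)) := by
        rw [hsplit]; ring
      have h7 : a / t₁ ^ n
          ≤ |S p x t₁| + |∑ q ∈ Finset.univ.erase k, x q / t₁ ^ (2 * (q.1 + 1))| := by
        rw [← habs, hAe, sub_eq_add_neg]
        calc |S p x t₁ + -(∑ q ∈ Finset.univ.erase k, x q / t₁ ^ (2 * (q.1 + 1)))|
            ≤ |S p x t₁| + |-(∑ q ∈ Finset.univ.erase k, x q / t₁ ^ (2 * (q.1 + 1)))| :=
              abs_add_le _ _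
          _ = |S p x t₁| + |∑ q ∈ Finset.univ.erase k, x q / t₁ ^ (2 * (q.1 + 1))| := by
              rw [abs_neg]
      linarith [hrest]
    have hrw : B / t₁ ^ (2 * k.1) = B * t₁ ^ 2 / t₁ ^ n := by
      rw [hn, show 2 * (k.1 + 1) = 2 * k.1 + 2 by ring, pow_add]
      field_simp
    have s1 : (a/2) / t₁ ^ n ≤ (a - B * t₁ ^ 2) / t₁ ^ n := by
      gcongr
      linarith
    have s2 : (a/2) / (a/8) ≤ (a/2) / t₁ ^ n :=
      div_le_div_of_nonneg_left (by positivity) hpow_pos hnt₁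
    have s3 : (a/2) / (a/8) = 4 := by
      field_simp
      ring
    have : 4 ≤ a / t₁ ^ n - B / t₁ ^ (2 * k.1) := by
      rw [hrw, ← sub_div]
      linarith
    linarith
  set T : ℝ := B + 1 with hT
  have hT1 : (1:ℝ) ≤ T := by linarith
  have hST : |S p x T| ≤ 1 := by
    have h8 : (1:ℝ) ≤ |T| := by rw [abs_of_pos (by linarith)]; exact hT1
    have h9 := abs_S_le p x h8
    rw [← hB] at h9
    have h10 : B / T ^ 2 ≤ 1 := by
      rw [div_le_one (by positivity)]
      nlinarith
    linarith
  have ht₁T : t₁ ≤ T := by linarith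
  have hcont : ContinuousOn (fun t => |S p x t|) (Set.Icc t₁ T) := by
    intro t ht
    exact (ContinuousAt.abs (S_cont p x (by
      have := ht.1; intro h; rw [h] at this; linarith))).continuousWithinAt
  have hmem : π ∈ Set.Icc (|S p x T|) (|S p x t₁|) :=
    ⟨by linarith [Real.pi_gt_three], by linarith [Real.pi_le_four]⟩
  obtain ⟨t₀, ht₀mem, ht₀⟩ := intermediate_value_Icc' ht₁T hcont hmem
  have ht₀0 : 0 < t₀ := lt_of_lt_of_le ht₁0 ht₀mem.1
  have ht₀' : |S p x t₀| = π := ht₀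
  have hft₀ : f p x t₀ = 2 := by
    rw [f, ← Real.cos_abs, ht₀', Real.cos_pi]
    norm_num
  have hcf : ContinuousAt (f p x) t₀ := by
    have : ContinuousAt (fun t => Real.cos (S p x t)) t₀ :=
      Real.continuous_cos.continuousAt.comp (S_cont p x ht₀0.ne')
    exact continuousAt_const.sub this
  have hev : (f p x) ⁻¹' Set.Ioi 1 ∈ nhds t₀ :=
    hcf (Ioi_mem_nhds (by rw [hft₀]; norm_num))
  obtain ⟨ε, hε, hball⟩ := Metric.mem_nhds_iff.1 hev
  set s : Set ℝ := Set.Ioo (t₀ - ε/2) (t₀ + ε/2) with hs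
  have hs_sub : s ⊆ (f p x) ⁻¹' Set.Ioi 1 := by
    intro t ht
    apply hball
    rw [Real.ball_eq_Ioo]
    exact ⟨by linarith [ht.1], by linarith [ht.2]⟩
  have hvol : (volume s).toReal = ε := by
    rw [hs, Real.volume_Ioo, ENNReal.toReal_ofReal (by linarith)]
    ring
  have hlow : 1 * (volume s).toReal ≤ ∫ t in s, f p x t :=
    setIntegral_ge_of_const_le_real measurableSet_Ioo
      (by simp only [hs, Real.volume_Ioo]; exact ENNReal.ofReal_ne_top)
      (fun t ht => (hs_sub ht).le) (integrable_f p x).integrableOn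
  have hup : ∫ t in s, f p x t ≤ J p x :=
    setIntegral_le_integral (integrable_f p x) (ae_of_all _ (f_nonneg p x))
  rw [hvol, one_mul] at hlow
  linarith


lemma J_cont (p : ℕ) : Continuous (J p) := by
  rw [continuous_iff_continuousAt]
  intro x₀
  have hJ : J p = fun x => ∫ t : ℝ, f p x t := rfl
  rw [hJ]
  set A : ℝ := max 2 (∑ q : Fin p, (|x₀ q| + 1)) with hA
  have hA2 : 2 ≤ A := le_max_left _ _
  apply MeasureTheory.continuousAt_of_dominated (bound := fun t => min 2 (A / t ^ 2))
  · exact Eventually.of_forall fun x =>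
      ((Real.measurable_cos.comp (measurable_S p x)).const_sub 1).aestronglyMeasurable
  · have hball : Metric.ball x₀ 1 ∈ nhds x₀ := Metric.ball_mem_nhds x₀ one_pos
    filter_upwards [hball] with x hx
    refine ae_of_all _ fun t => ?_
    have hsum : (∑ q : Fin p, |x q|) ≤ A := by
      refine le_trans (Finset.sum_le_sum fun q _ => ?_) (le_max_right _ _)
      have h1 : |x q - x₀ q| ≤ dist x x₀ := by
        have := norm_le_pi_norm (x - x₀) q
        simpa [Real.norm_eq_abs, dist_eq_norm] using this
      have h2 : dist x x₀ < 1 := Metric.mem_ball.1 hx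
      calc |x q| = |x₀ q + (x q - x₀ q)| := by ring_nf
        _ ≤ |x₀ q| + |x q - x₀ q| := abs_add_le _ _
        _ ≤ |x₀ q| + 1 := by linarith
    rw [Real.norm_eq_abs, abs_of_nonneg (f_nonneg p x t)]
    refine le_min_bound p x hA2 hsum t (f_le_two p x t) ?_
    rw [f]
    exact one_sub_cos_le_abs (S p x t)
  · exact integrable_bound A (by linarith)
  · refine ae_of_all _ fun t => ?_
    have hc : Continuous fun x : Fin p → ℝ => S p x t := by
      apply continuous_finset_sum
      intro q _
      exact (continuous_apply q).div_const _
    exact (continuous_const.sub (Real.continuous_cos.comp hc)).continuousAt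


/-- `|ψ(x)| ≤ exp(−C‖x‖^{1/(2p)})` for ‖x‖ large, ‖·‖ the Euclidean norm on `ℝ^p`. -/
theorem statement_13 (p : ℕ) (hp : 1 ≤ p) :
    ∃ C : ℝ, 0 < C ∧ ∃ R : ℝ, 0 < R ∧
      ∀ x : EuclideanSpace ℝ (Fin p), R ≤ ‖x‖ →
        ‖psi p x‖ ≤ Real.exp (-C * ‖x‖ ^ ((1 : ℝ) / (2 * p))) := by
  haveI : Nonempty (Fin p) := ⟨⟨0, hp⟩⟩
  obtain ⟨y₀, hy₀mem, hmin'⟩ := (isCompact_sphere (0 : Fin p → ℝ) 1).exists_isMinOn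
    (NormedSpace.sphere_nonempty.mpr zero_le_one) ((J_cont p).continuousOn)
  have hmin : ∀ z ∈ Metric.sphere (0 : Fin p → ℝ) 1, J p y₀ ≤ J p z :=
    fun z hz => isMinOn_iff.1 hmin' z hz
  have hy₀ : y₀ ≠ 0 := by
    intro h
    have h2 := mem_sphere_zero_iff_norm.1 hy₀mem
    rw [h] at h2
    simp at h2
  set c : ℝ := J p y₀ with hc
  have hc0 : 0 < c := J_pos p y₀ hy₀
  set e : ℝ := (1:ℝ) / (2 * (p:ℝ)) with he
  have hp0 : (0:ℝ) < p := by exact_mod_cast hp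
  have he0 : 0 < e := by rw [he]; positivity
  set sp : ℝ := Real.sqrt p with hsp
  have hsp1 : 1 ≤ sp := by
    rw [hsp, show (1:ℝ) = Real.sqrt 1 by simp]
    exact Real.sqrt_le_sqrt (by exact_mod_cast hp)
  have hsp0 : 0 < sp := lt_of_lt_of_le one_pos hsp1
  have hspe : 0 < sp ^ e := Real.rpow_pos_of_pos hsp0 e
  have hpi : 0 < (16 * π)⁻¹ := by positivity
  refine ⟨(16 * π)⁻¹ * c * (sp ^ e)⁻¹,
    mul_pos (mul_pos hpi hc0) (inv_pos.2 hspe), sp, hsp0, ?_⟩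
  intro x hx
  set M : ℝ := ‖x‖ with hM
  have hM0 : 0 < M := lt_of_lt_of_le hsp0 hx
  obtain ⟨qs, _, hqs⟩ := Finset.exists_max_image Finset.univ (fun q : Fin p => |x q|)
    ⟨⟨0, hp⟩, Finset.mem_univ _⟩
  have hnorm_le : M ≤ sp * |x qs| := by
    rw [hM, EuclideanSpace.norm_eq]
    have hsum : (∑ i : Fin p, ‖x i‖ ^ 2) ≤ (p : ℝ) * |x qs| ^ 2 := by
      calc (∑ i : Fin p, ‖x i‖ ^ 2) ≤ ∑ _i : Fin p, |x qs| ^ 2 :=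
            Finset.sum_le_sum (fun i _ => by
              rw [Real.norm_eq_abs]
              exact pow_le_pow_left₀ (abs_nonneg _) (hqs i (Finset.mem_univ i)) 2)
        _ = (p : ℝ) * |x qs| ^ 2 := by
            rw [Finset.sum_const, Finset.card_univ, Fintype.card_fin, nsmul_eq_mul]
    calc Real.sqrt (∑ i : Fin p, ‖x i‖ ^ 2) ≤ Real.sqrt ((p:ℝ) * |x qs| ^ 2) :=
          Real.sqrt_le_sqrt hsum
      _ = sp * |x qs| := by
          rw [Real.sqrt_mul (by positivity), Real.sqrt_sq_eq_abs, abs_abs, hsp]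
  have hxqs1 : 1 ≤ |x qs| := by
    have h3 : sp ≤ sp * |x qs| := le_trans hx hnorm_le
    nlinarith
  set l : ℝ := Finset.univ.sup' Finset.univ_nonempty
    (fun q : Fin p => |x q| ^ (((2 * (q.1 + 1) : ℕ) : ℝ))⁻¹) with hl
  have hl_ge : ∀ q : Fin p, |x q| ^ (((2 * (q.1 + 1) : ℕ) : ℝ))⁻¹ ≤ l := fun q =>
    Finset.le_sup' (fun q : Fin p => |x q| ^ (((2 * (q.1 + 1) : ℕ) : ℝ))⁻¹)
      (Finset.mem_univ q)
  have hl1 : 1 ≤ l := by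
    refine le_trans ?_ (hl_ge qs)
    rw [← Real.one_rpow (((2 * (qs.1 + 1) : ℕ) : ℝ))⁻¹]
    exact Real.rpow_le_rpow zero_le_one hxqs1 (by positivity)
  have hl0 : 0 < l := lt_of_lt_of_le one_pos hl1
  obtain ⟨qh, _, hqh⟩ := Finset.exists_mem_eq_sup' (Finset.univ_nonempty)
    (fun q : Fin p => |x q| ^ (((2 * (q.1 + 1) : ℕ) : ℝ))⁻¹)
  set y : Fin p → ℝ := fun q => x q / l ^ (2 * (q.1 + 1)) with hy
  have hpow_le : ∀ q : Fin p, |x q| ≤ l ^ (2 * (q.1 + 1)) := by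
    intro q
    have h1 := pow_le_pow_left₀ (Real.rpow_nonneg (abs_nonneg (x q)) _) (hl_ge q) (2 * (q.1 + 1))
    rwa [Real.rpow_inv_natCast_pow (abs_nonneg (x q)) (by omega)] at h1
  have hyq : ∀ q : Fin p, |y q| ≤ 1 := by
    intro q
    rw [hy]
    simp only
    rw [abs_div, abs_of_pos (pow_pos hl0 _)]
    rw [div_le_one (pow_pos hl0 _)]
    exact hpow_le q
  have hlqh : l ^ (2 * (qh.1 + 1)) = |x qh| := by
    rw [← hl] at hqh
    rw [hqh]
    exact Real.rpow_inv_natCast_pow (abs_nonneg _) (by omega)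
  have hxqh0 : 0 < |x qh| := hlqh ▸ pow_pos hl0 _
  have hyqh : |y qh| = 1 := by
    rw [hy]
    simp only
    rw [abs_div, abs_of_pos (pow_pos hl0 _), hlqh, div_self hxqh0.ne']
  have hy_norm : ‖y‖ = 1 := by
    apply le_antisymm
    · exact (pi_norm_le_iff_of_nonneg zero_le_one).2
        (fun q => by rw [Real.norm_eq_abs]; exact hyq q)
    · calc (1:ℝ) = ‖y qh‖ := by rw [Real.norm_eq_abs, hyqh]
        _ ≤ ‖y‖ := norm_le_pi_norm y qh
  have hJy : c ≤ J p y := hmin y (mem_sphere_zero_iff_norm.2 hy_norm)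
  have hscale : J p x = l * J p y := J_scale p x hl0
  have hle_exp : |x qs| ^ e ≤ l := by
    refine le_trans ?_ (hl_ge qs)
    apply Real.rpow_le_rpow_of_exponent_le hxqs1
    rw [he, one_div]
    apply inv_anti₀
    · positivity
    · have hlt : qs.1 + 1 ≤ p := qs.2
      have hle : ((qs.1 + 1 : ℕ) : ℝ) ≤ (p : ℝ) := by exact_mod_cast hlt
      push_cast at hle ⊢
      linarith
  have hMsp : M / sp ≤ |x qs| := by
    rw [div_le_iff₀ hsp0]
    linarith [hnorm_le]
  have hMe : (M / sp) ^ e ≤ |x qs| ^ e := Real.rpow_le_rpow (by positivity) hMsp he0.le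
  have hfin : c * (M ^ e / sp ^ e) ≤ J p x := by
    have h1 : (M / sp) ^ e = M ^ e / sp ^ e := Real.div_rpow (norm_nonneg x) (Real.sqrt_nonneg _) e
    calc c * (M ^ e / sp ^ e) = (M / sp) ^ e * c := by rw [h1]; ring
      _ ≤ l * c := mul_le_mul_of_nonneg_right (le_trans hMe hle_exp) hc0.le
      _ ≤ l * J p y := mul_le_mul_of_nonneg_left hJy hl0.le
      _ = J p x := hscale.symm
  rw [abs_psi p x, Real.exp_le_exp]
  have h2 : (16 * π)⁻¹ * c * (sp ^ e)⁻¹ * M ^ e ≤ (16 * π)⁻¹ * J p x := by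
    calc (16 * π)⁻¹ * c * (sp ^ e)⁻¹ * M ^ e
        = (16 * π)⁻¹ * (c * (M ^ e / sp ^ e)) := by
          rw [div_eq_mul_inv]
          ring
      _ ≤ (16 * π)⁻¹ * J p x := mul_le_mul_of_nonneg_left hfin hpi.le
  linarith

end Stmt13
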